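/- Let G be a 2-connected matching-covered bipartite graph with bipartition X ⊔ Y, and let T ⊆ X be a tight acceptable set (|N_G(T)| = |T| + 1). Set S = Y \ N_G(T). Then S is a tight acceptable subset of Y, N_G(S) = X \ T, and for any non-edge (x,y) with x ∈ T and y ∉ N_G(T), one has y ∈ S and x ∉ N_G(S). -/
import Mathlib


attribute [local instance] Classical.propDecidable

/-- `X ⊔ Y` is a bipartition of the graph `G`. -/
def IsBipartition {V : Type*} (G : SimpleGraph V) [Fintype V] (X Y : Finset V) : Prop :=
  Disjoint X Y ∧ X ∪ Y = Finset.univ ∧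
    ∀ x y : V, G.Adj x y → (x ∈ X ∧ y ∈ Y) ∨ (x ∈ Y ∧ y ∈ X)

/-- `G` is connected and every edge of `G` lies in a perfect matching. -/
def MatchingCovered {V : Type*} (G : SimpleGraph V) : Prop :=
  G.Connected ∧ ∀ e ∈ G.edgeSet, ∃ M : G.Subgraph, M.IsPerfectMatching ∧ e ∈ M.edgeSet

/-- `G` is connected and remains connected after deleting any single vertex. -/
def TwoConnected {V : Type*} (G : SimpleGraph V) : Prop :=
  G.Connected ∧ ∀ v : V, (G.induce {u : V | u ≠ v}).Connected

/-- The neighborhood of the vertex set `A` in `G`. -/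
noncomputable def nbhd {V : Type*} [Fintype V] (G : SimpleGraph V) (A : Finset V) : Finset V :=
  Finset.univ.filter (fun y => ∃ x ∈ A, G.Adj x y)

/-- `T` is a tight subset: `|N_G(T)| = |T| + 1`. -/
def Tight {V : Type*} [Fintype V] (G : SimpleGraph V) (T : Finset V) : Prop :=
  (nbhd G T).card = T.card + 1

/-- `T ⊆ X` is an acceptable set of the bipartite graph `G` with bipartition `X ⊔ Y`:
the graph induced by the edges between `T` and `N_G(T)` is connected, and the induced
subgraph on `(X \ T) ⊔ (Y \ N_G(T))` is connected with at least one edge. -/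
def Acceptable {V : Type*} [Fintype V] (G : SimpleGraph V) (X Y T : Finset V) : Prop :=
  T.Nonempty ∧ T ⊆ X ∧
    (G.induce (↑(T ∪ nbhd G T) : Set V)).Connected ∧
    (G.induce (↑((X \ T) ∪ (Y \ nbhd G T)) : Set V)).Connected ∧
    ∃ x ∈ X \ T, ∃ y ∈ Y \ nbhd G T, G.Adj x y

lemma exists_adj_of_connected {V : Type*} {G : SimpleGraph V} (hc : G.Connected)
    {u v : V} (h : u ≠ v) : ∃ w, G.Adj u w := by
  obtain ⟨p⟩ := hc.preconnected u v
  cases p with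
  | nil => exact absurd rfl h
  | cons h' _ => exact ⟨_, h'⟩

lemma mem_nbhd {V : Type*} [Fintype V] {G : SimpleGraph V} {A : Finset V} {y : V} :
    y ∈ nbhd G A ↔ ∃ x ∈ A, G.Adj x y := by
  simp [nbhd]

theorem stmt11 {V : Type*} [Fintype V] (G : SimpleGraph V) (X Y : Finset V) (n : ℕ)
    (hbip : IsBipartition G X Y) (hX : X.card = n) (hY : Y.card = n)
    (hmc : MatchingCovered G) (h2 : TwoConnected G)
    (T : Finset V) (hT : Acceptable G X Y T) (hTt : Tight G T) :
    Tight G (Y \ nbhd G T) ∧ Acceptable G Y X (Y \ nbhd G T) ∧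
      nbhd G (Y \ nbhd G T) = X \ T ∧
      ∀ x ∈ T, ∀ y ∈ Y, y ∉ nbhd G T → ¬ G.Adj x y →
        y ∈ Y \ nbhd G T ∧ x ∉ nbhd G (Y \ nbhd G T) := by
  obtain ⟨hdisj, huniv, hadj⟩ := hbip
  obtain ⟨hTne, hTX, hconn1, hconn2, x0, hx0, y0, hy0, hadj0⟩ := hT
  have hXY : ∀ {v : V}, v ∈ X → v ∉ Y := fun hv => Finset.disjoint_left.mp hdisj hv
  have hYX : ∀ {v : V}, v ∈ Y → v ∉ X := fun hv => Finset.disjoint_right.mp hdisj hv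
  -- neighbors of X-vertices are in Y
  have hadjXY : ∀ {x y : V}, x ∈ X → G.Adj x y → y ∈ Y := by
    intro x y hx h
    rcases hadj x y h with ⟨_, hy⟩ | ⟨hx', _⟩
    · exact hy
    · exact absurd hx' (hXY hx)
  have hadjYX : ∀ {x y : V}, y ∈ Y → G.Adj x y → x ∈ X := by
    intro x y hy h
    rcases hadj x y h with ⟨hx, _⟩ | ⟨_, hy'⟩
    · exact hx
    · exact absurd hy' (hYX hy)
  -- N(T) ⊆ Y
  have hNTY : nbhd G T ⊆ Y := by
    intro y hy
    obtain ⟨x, hxT, hxy⟩ := mem_nbhd.mp hy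
    exact hadjXY (hTX hxT) hxy
  -- key equality: N(Y \ N(T)) = X \ T
  have hkey : nbhd G (Y \ nbhd G T) = X \ T := by
    apply Finset.Subset.antisymm
    · intro x hx
      obtain ⟨y, hyS, hyx⟩ := mem_nbhd.mp hx
      obtain ⟨hyY, hyN⟩ := Finset.mem_sdiff.mp hyS
      have hxX : x ∈ X := hadjYX hyY hyx.symm
      refine Finset.mem_sdiff.mpr ⟨hxX, fun hxT => ?_⟩
      exact hyN (mem_nbhd.mpr ⟨x, hxT, hyx.symm⟩)
    · intro x hx
      obtain ⟨hxX, hxT⟩ := Finset.mem_sdiff.mp hx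
      -- x lies in the connected induced graph on (X\T) ∪ (Y\N(T)), which has ≥ 2 vertices
      set s : Set V := (↑((X \ T) ∪ (Y \ nbhd G T)) : Set V) with hs
      have hxs : x ∈ s := by
        simp only [hs, Finset.coe_union, Set.mem_union, Finset.mem_coe]
        exact Or.inl hx
      have hx0s : x0 ∈ s := by
        simp only [hs, Finset.coe_union, Set.mem_union, Finset.mem_coe]
        exact Or.inl hx0
      have hy0s : y0 ∈ s := by
        simp only [hs, Finset.coe_union, Set.mem_union, Finset.mem_coe]
        exact Or.inr hy0
      have hne : x0 ≠ y0 := hadj0.ne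
      have : ∃ w : s, (G.induce s).Adj ⟨x, hxs⟩ w := by
        by_cases hxx0 : x = x0
        · refine exists_adj_of_connected hconn2 (v := ⟨y0, hy0s⟩) ?_
          intro hcontra
          exact hne (hxx0 ▸ congrArg Subtype.val hcontra)
        · refine exists_adj_of_connected hconn2 (v := ⟨x0, hx0s⟩) ?_
          intro hcontra
          exact hxx0 (congrArg Subtype.val hcontra)
      obtain ⟨⟨w, hws⟩, hadjw⟩ := this
      have hGadj : G.Adj x w := hadjw
      have hwY : w ∈ Y := hadjXY hxX hGadj
      have hwS : w ∈ Y \ nbhd G T := by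
        simp only [hs, Finset.coe_union, Set.mem_union, Finset.mem_coe] at hws
        rcases hws with hw | hw
        · exact absurd (Finset.mem_sdiff.mp hw).1 (hYX hwY)
        · exact hw
      exact mem_nbhd.mpr ⟨w, hwS, hGadj.symm⟩
  -- set rewrites
  have hYS : Y \ (Y \ nbhd G T) = nbhd G T := by
    exact Finset.sdiff_sdiff_eq_self hNTY
  have hXNS : X \ nbhd G (Y \ nbhd G T) = T := by
    rw [hkey]; exact Finset.sdiff_sdiff_eq_self hTX
  -- cardinalities
  have hScard : (Y \ nbhd G T).card = n - (T.card + 1) := by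
    rw [Finset.card_sdiff_of_subset hNTY, hY, hTt]
  have hNTle : T.card + 1 ≤ n := by
    rw [← hTt, ← hY]; exact Finset.card_le_card hNTY
  have hTight : Tight G (Y \ nbhd G T) := by
    unfold Tight
    rw [hkey, Finset.card_sdiff_of_subset hTX, hX, hScard]
    omega
  refine ⟨hTight, ?_, hkey, ?_⟩
  · -- Acceptable G Y X (Y \ nbhd G T)
    refine ⟨⟨y0, hy0⟩, Finset.sdiff_subset, ?_, ?_, ?_⟩
    · rw [hkey, Finset.union_comm]
      exact hconn2
    · rw [hYS, hXNS, Finset.union_comm]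
      exact hconn1
    · -- ∃ y ∈ Y \ S, ∃ x ∈ X \ N(S), G.Adj y x
      obtain ⟨t, htT⟩ := hTne
      have htx : t ∈ X := hTX htT
      have hty : t ≠ y0 := by
        intro h
        exact hYX (Finset.mem_sdiff.mp hy0).1 (h ▸ htx)
      obtain ⟨w, hw⟩ := exists_adj_of_connected hmc.1 hty
      have hwY : w ∈ Y := hadjXY htx hw
      have hwN : w ∈ nbhd G T := mem_nbhd.mpr ⟨t, htT, hw⟩
      refine ⟨w, ?_, t, ?_, hw.symm⟩
      · rw [hYS]; exact hwN
      · rw [hXNS]; exact htT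
  · intro x hxT y hyY hyN _
    refine ⟨Finset.mem_sdiff.mpr ⟨hyY, hyN⟩, ?_⟩
    rw [hkey]
    intro hc
    exact (Finset.mem_sdiff.mp hc).2 hxT
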